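/- arXiv:1204.3293 — 2 statements merged into one kernel-verified Lean document; each statement's English description precedes it below -/
import Mathlib

section
/- If a string w contains a factorization w = v₁ x v₂ x v₃ x u where x is a single character and v₂ ≠ v₃ are strings not containing x, then w is not uniquely decodable from its bigrams: the string v₁ x v₃ x v₂ x u has the same bigram multiset as w. -/
/-- The multiset of bigrams (length-2 contiguous substrings) of a list. -/
def bigrams {β : Type*} (l : List β) : Multiset (β × β) :=
  (l.zip l.tail : List (β × β))

/-- The delimited form `$w$` of a string `w` over `α`, with `none` as the delimiter. -/
def delim {α : Type*} (w : List α) : List (Option α) :=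
  none :: (w.map some ++ [none])

/-- The bigram encoding of a string: the multiset of bigrams of its delimited form. -/
def Phi {α : Type*} (w : List α) : Multiset (Option α × Option α) :=
  bigrams (delim w)

/-- A string is uniquely decodable if it is the only string with its bigram encoding. -/
def UD {α : Type*} (w : List α) : Prop :=
  ∀ w' : List α, Phi w' = Phi w → w' = w

lemma bigrams_cons_cons {β : Type*} (b c : β) (t : List β) :
    bigrams (b :: c :: t) = (b, c) ::ₘ bigrams (c :: t) := rfl

lemma bigrams_append {β : Type*} (l₁ : List β) (a : β) (l₂ : List β) :
    bigrams (l₁ ++ a :: l₂) = bigrams (l₁ ++ [a]) + bigrams (a :: l₂) := by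
  induction l₁ with
  | nil => simp [bigrams]
  | cons b l₁ ih =>
    cases l₁ with
    | nil =>
      simp [bigrams_cons_cons, show bigrams [a] = 0 from rfl]
    | cons c l₁' =>
      simp only [List.cons_append] at ih ⊢
      rw [bigrams_cons_cons, bigrams_cons_cons, ih]
      simp [Multiset.cons_add]

lemma append_cons_inj {β : Type*} {x : β} :
    ∀ (a : List β), ∀ (b s t : List β), x ∉ a → x ∉ b →
      a ++ x :: s = b ++ x :: t → a = b := by
  intro a
  induction a with
  | nil =>
    intro b s t _ hb h
    cases b with
    | nil => rfl
    | cons c b' =>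
      simp at h
      obtain ⟨rfl, -⟩ := h
      exact absurd List.mem_cons_self hb
  | cons c a' ih =>
    intro b s t ha hb h
    cases b with
    | nil =>
      simp at h
      obtain ⟨rfl, -⟩ := h
      exact absurd List.mem_cons_self ha
    | cons d b' =>
      simp at h
      obtain ⟨rfl, h2⟩ := h
      have := ih b' s t (fun m => ha (List.mem_cons_of_mem _ m))
        (fun m => hb (List.mem_cons_of_mem _ m)) h2
      rw [this]

theorem not_UD_of_three_occurrences {α : Type*} [Fintype α]
    (x : α) (v₁ v₂ v₃ u : List α)
    (h2 : x ∉ v₂) (h3 : x ∉ v₃) (hne : v₂ ≠ v₃) :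
    Phi (v₁ ++ [x] ++ v₃ ++ [x] ++ v₂ ++ [x] ++ u)
      = Phi (v₁ ++ [x] ++ v₂ ++ [x] ++ v₃ ++ [x] ++ u) ∧
    ¬ UD (v₁ ++ [x] ++ v₂ ++ [x] ++ v₃ ++ [x] ++ u) := by
  have key : ∀ a b : List α,
      Phi (v₁ ++ [x] ++ a ++ [x] ++ b ++ [x] ++ u)
        = bigrams ((none :: v₁.map some) ++ [some x])
          + bigrams (some x :: (a.map some ++ [some x]))
          + bigrams (some x :: (b.map some ++ [some x]))
          + bigrams (some x :: (u.map some ++ ([none] : List (Option α)))) := by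
    intro a b
    have hform : delim (v₁ ++ [x] ++ a ++ [x] ++ b ++ [x] ++ u)
        = (none :: v₁.map some) ++ some x ::
            (a.map some ++ some x :: (b.map some ++ some x :: (u.map some ++ [none]))) := by
      simp [delim]
    have step : ∀ (c : Option α) (l₁ : List (Option α)) (d : Option α) (l₂ : List (Option α)),
        bigrams (c :: (l₁ ++ d :: l₂)) = bigrams ((c :: l₁) ++ [d]) + bigrams (d :: l₂) :=
      fun c l₁ d l₂ => bigrams_append (c :: l₁) d l₂
    rw [Phi, hform, bigrams_append, step, step]
    simp [add_assoc]
  have hPhi : Phi (v₁ ++ [x] ++ v₃ ++ [x] ++ v₂ ++ [x] ++ u)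
      = Phi (v₁ ++ [x] ++ v₂ ++ [x] ++ v₃ ++ [x] ++ u) := by
    rw [key, key]; abel
  refine ⟨hPhi, fun hUD => ?_⟩
  have := hUD _ hPhi
  have h' : v₃ ++ x :: (v₂ ++ [x] ++ u) = v₂ ++ x :: (v₃ ++ [x] ++ u) := by
    have := this
    simp only [List.append_assoc] at this
    have := List.append_cancel_left this
    have := List.append_cancel_left this
    simpa using this
  exact hne (append_cons_inj v₃ v₂ _ _ h3 h2 h').symm
end

section
/- If in the bigram graph of a string w some character x ∈ Σ has three or more distinct in-neighbors (characters a with edge a → x), then w is not uniquely decodable from its bigrams. -/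
lemma mem_bigrams {β : Type*} {u v : β} {l : List β} :
    (u, v) ∈ bigrams l ↔ ∃ n, l[n]? = some u ∧ l[n + 1]? = some v := by
  show (u, v) ∈ l.zip l.tail ↔ _
  rw [List.mem_iff_getElem?]
  constructor
  · rintro ⟨n, hn⟩
    rw [List.zip_eq_zipWith, List.getElem?_zipWith] at hn
    refine ⟨n, ?_⟩
    rcases h1 : l[n]? with _ | p <;> rcases h2 : l.tail[n]? with _ | q <;>
        rw [h1, h2] at hn
    · exact absurd hn (by simp)
    · exact absurd hn (by simp)
    · exact absurd hn (by simp)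
    · rw [List.getElem?_tail] at h2
      have hpq : p = u ∧ q = v := by simpa using hn
      obtain ⟨rfl, rfl⟩ := hpq
      exact ⟨rfl, h2⟩
  · rintro ⟨n, h1, h2⟩
    refine ⟨n, ?_⟩
    rw [List.zip_eq_zipWith, List.getElem?_zipWith, h1, List.getElem?_tail, h2]

lemma bigrams_split {β : Type*} (u v : List β) (y : β) :
    bigrams (u ++ y :: v) = bigrams (u ++ [y]) + bigrams (y :: v) := by
  induction u with
  | nil => simp [bigrams]
  | cons a u ih =>
    cases u with
    | nil => simp [bigrams, List.zip_eq_zipWith]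
    | cons a' u' =>
      have h1 : bigrams (a :: a' :: (u' ++ y :: v)) = (a, a') ::ₘ bigrams (a' :: (u' ++ y :: v)) := rfl
      have h2 : bigrams (a :: a' :: (u' ++ [y])) = (a, a') ::ₘ bigrams (a' :: (u' ++ [y])) := rfl
      simp only [List.cons_append] at *
      rw [h1, h2, ih]
      simp [Multiset.cons_add]

lemma length_lt_of_getElem?_eq_some {β : Type*} {l : List β} {n : ℕ} {y : β}
    (h : l[n]? = some y) : n < l.length := by
  by_contra hn
  rw [List.getElem?_eq_none (by omega)] at h
  cases h

lemma core {β : Type*} {l : List β} {y : β} {I J K : ℕ} (hIJ : I < J) (hJK : J < K)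
    (hI : l[I]? = some y) (hJ : l[J]? = some y) (hK : l[K]? = some y)
    (hpred : l[J - 1]? ≠ l[K - 1]?) :
    ∃ p q s r : List β, l = p ++ y :: (q ++ y :: (s ++ y :: r)) ∧
      bigrams (p ++ y :: (s ++ y :: (q ++ y :: r))) = bigrams l ∧
      p ++ y :: (s ++ y :: (q ++ y :: r)) ≠ l := by
  have hKl : K < l.length := length_lt_of_getElem?_eq_some hK
  have hIl : I < l.length := by omega
  have hJl : J < l.length := by omega
  set p := l.take I with hp
  set q := (l.drop (I + 1)).take (J - I - 1) with hq
  set s := (l.drop (J + 1)).take (K - J - 1) with hs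
  set r := l.drop (K + 1) with hr
  have hpl : p.length = I := by simp [hp]; omega
  have hql : q.length = J - I - 1 := by simp [hq]; omega
  have hsl : s.length = K - J - 1 := by simp [hs]; omega
  have gI : l[I] = y := by rw [List.getElem?_eq_getElem hIl] at hI; exact Option.some.inj hI
  have gJ : l[J] = y := by rw [List.getElem?_eq_getElem hJl] at hJ; exact Option.some.inj hJ
  have gK : l[K] = y := by rw [List.getElem?_eq_getElem hKl] at hK; exact Option.some.inj hK
  have e2 : l.drop (I + 1) = q ++ l.drop J := by
    conv_lhs => rw [← List.take_append_drop (J - I - 1) (l.drop (I + 1))]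
    rw [List.drop_drop]
    congr 2
    omega
  have e3 : l.drop (J + 1) = s ++ l.drop K := by
    conv_lhs => rw [← List.take_append_drop (K - J - 1) (l.drop (J + 1))]
    rw [List.drop_drop]
    congr 2
    omega
  have hdec : l = p ++ y :: (q ++ y :: (s ++ y :: r)) := by
    conv_lhs => rw [← List.take_append_drop I l, List.drop_eq_getElem_cons hIl, gI,
      e2, List.drop_eq_getElem_cons hJl, gJ, e3, List.drop_eq_getElem_cons hKl, gK]
  have expand : ∀ q' s' : List β, bigrams (p ++ y :: (q' ++ y :: (s' ++ y :: r))) =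
      bigrams (p ++ [y]) + (bigrams ((y :: q') ++ [y]) + (bigrams ((y :: s') ++ [y]) + bigrams (y :: r))) := by
    intro q' s'
    rw [bigrams_split p (q' ++ y :: (s' ++ y :: r)) y]
    congr 1
    rw [show y :: (q' ++ y :: (s' ++ y :: r)) = (y :: q') ++ y :: (s' ++ y :: r) from rfl,
      bigrams_split (y :: q') (s' ++ y :: r) y]
    congr 1
    rw [show y :: (s' ++ y :: r) = (y :: s') ++ y :: r from rfl, bigrams_split (y :: s') r y]
  refine ⟨p, q, s, r, hdec, ?_, ?_⟩
  · rw [expand s q]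
    conv_rhs => rw [hdec, expand q s]
    abel
  · intro heq
    have h1 : s ++ y :: (q ++ y :: r) = q ++ y :: (s ++ y :: r) := by
      have h0 := heq.trans hdec
      have := List.append_cancel_left h0
      exact List.cons.inj this |>.2
    have h2 : (s ++ y :: q) ++ (y :: r) = (q ++ y :: s) ++ (y :: r) := by
      simpa [List.append_assoc] using h1
    have h3 : s ++ y :: q = q ++ y :: s := List.append_cancel_right h2
    have h4 : (y :: q).getLast? = (y :: s).getLast? := by
      have := congrArg List.getLast? h3
      rwa [List.getLast?_append, List.getLast?_append,
        show (y :: q).getLast?.or s.getLast? = (y :: q).getLast? from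
          Option.or_of_isSome (by simp [List.getLast?_eq_getElem?]),
        show (y :: s).getLast?.or q.getLast? = (y :: s).getLast? from
          Option.or_of_isSome (by simp [List.getLast?_eq_getElem?])] at this
    apply hpred
    have hA : l[J - 1]? = (y :: q).getLast? := by
      conv_lhs => rw [hdec, show p ++ y :: (q ++ y :: (s ++ y :: r)) =
        (p ++ y :: q) ++ (y :: (s ++ y :: r)) by simp [List.append_assoc]]
      rw [List.getElem?_append_left (by simp [hpl, hql]; omega),
        List.getElem?_append_right (by omega : p.length ≤ J - 1)]
      rw [List.getLast?_eq_getElem?]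
      congr 1
      simp [hpl, hql]
      omega
    have hB : l[K - 1]? = (y :: s).getLast? := by
      conv_lhs => rw [hdec, show p ++ y :: (q ++ y :: (s ++ y :: r)) =
        (p ++ y :: q) ++ ((y :: s) ++ (y :: r)) by simp [List.append_assoc]]
      rw [List.getElem?_append_right (by simp [hpl, hql]; omega),
        List.getElem?_append_left (by simp [hpl, hql, hsl]; omega)]
      rw [List.getLast?_eq_getElem?]
      congr 1
      simp [hpl, hql, hsl]
      omega
    rw [hA, hB, h4]

lemma gl1 {β : Type*} (A : List β) (z : β) (B : List β) :
    (A ++ z :: B).getLast? = (z :: B).getLast? := by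
  rw [List.getLast?_append]
  exact Option.or_of_isSome (by simp [List.getLast?_eq_getElem?])

lemma gl2 {β : Type*} (z : β) (A : List β) (z' : β) (B : List β) :
    (z :: (A ++ z' :: B)).getLast? = (z' :: B).getLast? := by
  rw [show z :: (A ++ z' :: B) = (z :: A) ++ z' :: B from rfl, gl1]


theorem not_UD_of_three_in_neighbors {α : Type*} [Fintype α] (w : List α) (x : α)
    (a b c : Option α) (hab : a ≠ b) (hac : a ≠ c) (hbc : b ≠ c)
    (ha : (a, (some x : Option α)) ∈ Phi w)
    (hb : (b, (some x : Option α)) ∈ Phi w)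
    (hc : (c, (some x : Option α)) ∈ Phi w) :
    ¬ UD w := by
  set D := delim w with hD
  obtain ⟨na, hna, hna'⟩ := mem_bigrams.mp ha
  obtain ⟨nb, hnb, hnb'⟩ := mem_bigrams.mp hb
  obtain ⟨nc, hnc, hnc'⟩ := mem_bigrams.mp hc
  have hne2 : ∀ {m n : ℕ} {p q : Option α}, p ≠ q → D[m]? = some p → D[n]? = some q →
      D[m]? ≠ D[n]? := by
    intro m n p q hpq hp hq
    rw [hp, hq]
    simpa using hpq
  have key : ∃ I J K : ℕ, I < J ∧ J < K ∧ D[I + 1]? = some (some x) ∧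
      D[J + 1]? = some (some x) ∧ D[K + 1]? = some (some x) ∧ D[J]? ≠ D[K]? := by
    have dab : na ≠ nb := fun h => hab (by rw [h] at hna; exact Option.some.inj (hna.symm.trans hnb))
    have dac : na ≠ nc := fun h => hac (by rw [h] at hna; exact Option.some.inj (hna.symm.trans hnc))
    have dbc : nb ≠ nc := fun h => hbc (by rw [h] at hnb; exact Option.some.inj (hnb.symm.trans hnc))
    rcases lt_trichotomy na nb with h1 | h1 | h1
    · rcases lt_trichotomy nb nc with h2 | h2 | h2
      · exact ⟨na, nb, nc, h1, h2, hna', hnb', hnc', hne2 hbc hnb hnc⟩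
      · exact absurd h2 dbc
      · rcases lt_trichotomy na nc with h3 | h3 | h3
        · exact ⟨na, nc, nb, h3, h2, hna', hnc', hnb', hne2 (Ne.symm hbc) hnc hnb⟩
        · exact absurd h3 dac
        · exact ⟨nc, na, nb, h3, h1, hnc', hna', hnb', hne2 hab hna hnb⟩
    · exact absurd h1 dab
    · rcases lt_trichotomy na nc with h2 | h2 | h2
      · exact ⟨nb, na, nc, h1, h2, hnb', hna', hnc', hne2 hac hna hnc⟩
      · exact absurd h2 dac
      · rcases lt_trichotomy nb nc with h3 | h3 | h3
        · exact ⟨nb, nc, na, h3, h2, hnb', hnc', hna', hne2 (Ne.symm hac) hnc hna⟩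
        · exact absurd h3 dbc
        · exact ⟨nc, nb, na, h3, h1, hnc', hnb', hna', hne2 (Ne.symm hab) hnb hna⟩
  obtain ⟨I, J, K, hIJ, hJK, hI, hJ, hK, hpred⟩ := key
  obtain ⟨p, q, s, r, hdec, hbig, hne⟩ :=
    core (l := D) (y := some x) (by omega) (by omega) hI hJ hK (by simpa using hpred)
  -- p = none :: p'
  rcases p with _ | ⟨p0, p'⟩
  · rw [hD] at hdec
    simp [delim] at hdec
  have hp0 : p0 = none := by
    rw [hD] at hdec
    simp only [delim, List.cons_append] at hdec
    exact (List.cons.inj hdec).1.symm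
  subst hp0
  have tailEq : w.map some ++ [none] = p' ++ some x :: (q ++ some x :: (s ++ some x :: r)) := by
    rw [hD] at hdec
    simp only [delim, List.cons_append] at hdec
    exact (List.cons.inj hdec).2
  -- r = r' ++ [none]
  have hLlast : (w.map some ++ [none]).getLast? = some none := by
    rw [gl1 (w.map some) none []]
    rfl
  rcases List.eq_nil_or_concat r with rfl | ⟨r', rl, rfl⟩
  · have h := congrArg List.getLast? tailEq
    rw [hLlast, gl1, gl2, gl2] at h
    exact absurd (Option.some.inj h) (by simp)
  simp only [List.concat_eq_append] at hdec hbig hne tailEq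
  have hrl : rl = none := by
    have h := congrArg List.getLast? tailEq
    rw [hLlast, gl1, gl2, gl2, gl2] at h
    exact (Option.some.inj h).symm
  subst hrl
  have tailEq' : w.map some = p' ++ some x :: (q ++ some x :: (s ++ some x :: r')) := by
    apply List.append_cancel_right (bs := [(none : Option α)])
    rw [tailEq]
    simp
  obtain ⟨w1, w25, hw, hw1, hw25⟩ := List.map_eq_append_iff.mp tailEq'
  obtain ⟨x1, w25', rfl, hx1, hw25'⟩ := List.map_eq_cons_iff.mp hw25
  obtain ⟨w2, w35, rfl, hw2, hw35⟩ := List.map_eq_append_iff.mp hw25'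
  obtain ⟨x2, w35', rfl, hx2, hw35'⟩ := List.map_eq_cons_iff.mp hw35
  obtain ⟨w3, w45, rfl, hw3, hw45⟩ := List.map_eq_append_iff.mp hw35'
  obtain ⟨x3, w4, rfl, hx3, hw4⟩ := List.map_eq_cons_iff.mp hw45
  have hx1' : x1 = x := Option.some.inj hx1
  have hx2' : x2 = x := Option.some.inj hx2
  have hx3' : x3 = x := Option.some.inj hx3
  subst x1
  subst x2
  subst x3
  set w' : List α := w1 ++ x :: (w3 ++ x :: (w2 ++ x :: w4)) with hw'
  have hdelim' : delim w' = (none :: p') ++ some x :: (s ++ some x :: (q ++ some x :: (r' ++ [none]))) := by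
    simp only [delim, hw', List.map_append, List.map_cons, hw1, hw2, hw3, hw4]
    simp
  intro hud
  have hPhi : Phi w' = Phi w := by
    show bigrams (delim w') = bigrams D
    rw [hdelim']
    exact hbig
  have := hud w' hPhi
  apply hne
  rw [← hdelim', this]
end
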